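/- arXiv:gr-qc/0504002 — 7 statements merged into one kernel-verified Lean document; each statement's English description precedes it below -/
import Mathlib

section
/- Let θ : ℝ → ℝ be continuous on [0,1], let A(λ) = exp(∫₀^λ θ(μ) dμ) be the associated area-decreasing factor, and let s : ℝ → ℝ be continuous on [0,1]. If s(λ) ≤ -θ(λ)/4 for every λ ∈ [0,1], then ∫₀¹ s(λ)·A(λ) dλ ≤ (1/4)·(1 - A(1)). -/
open Set intervalIntegral

/-- Single-generator sufficiency direction of Proposition 1: if the entropy
density satisfies `s ≤ -θ/4` on `[0,1]`, then the entropy flux through the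
light sheet is bounded by one quarter of the area decrease. -/
theorem generalized_entropy_bound_single_generator
    (θ s : ℝ → ℝ)
    (hθ : ContinuousOn θ (Icc 0 1))
    (hs : ContinuousOn s (Icc 0 1))
    (A : ℝ → ℝ)
    (hA : ∀ l : ℝ, A l = Real.exp (∫ μ in (0:ℝ)..l, θ μ))
    (hcond : ∀ l ∈ Icc (0:ℝ) 1, s l ≤ -θ l / 4) :
    (∫ l in (0:ℝ)..1, s l * A l) ≤ (1/4) * (1 - A 1) := by
  have h01 : (0:ℝ) ≤ 1 := by norm_num
  -- continuous extension of θ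
  set g : ℝ → ℝ := IccExtend h01 ((Icc (0:ℝ) 1).restrict θ) with hg
  have hgc : Continuous g := (hθ.restrict).Icc_extend'
  have hgeq : ∀ l ∈ Icc (0:ℝ) 1, g l = θ l := by
    intro l hl
    simp [hg, IccExtend_of_mem h01 _ hl]; rfl
  set B : ℝ → ℝ := fun l => Real.exp (∫ μ in (0:ℝ)..l, g μ) with hB
  have hBderiv : ∀ l : ℝ, HasDerivAt B (g l * B l) l := by
    intro l
    have h1 : HasDerivAt (fun u => ∫ μ in (0:ℝ)..u, g μ) (g l) l :=
      intervalIntegral.integral_hasDerivAt_right (hgc.intervalIntegrable _ _)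
        (hgc.aestronglyMeasurable.stronglyMeasurableAtFilter) hgc.continuousAt
    have := (Real.hasDerivAt_exp _).comp l h1
    simpa [hB, mul_comm, Function.comp_def] using this
  have hBcont : Continuous B :=
    continuous_iff_continuousAt.2 fun l => (hBderiv l).continuousAt
  have hBA : ∀ l ∈ Icc (0:ℝ) 1, B l = A l := by
    intro l hl
    have hsub : uIcc (0:ℝ) l ⊆ Icc 0 1 := by
      rw [uIcc_of_le hl.1]
      exact Icc_subset_Icc le_rfl hl.2
    have hint : (∫ μ in (0:ℝ)..l, g μ) = ∫ μ in (0:ℝ)..l, θ μ :=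
      intervalIntegral.integral_congr fun x hx => hgeq x (hsub hx)
    rw [hA l]
    exact congrArg Real.exp hint
  -- FTC for g*B
  have hftc : (∫ l in (0:ℝ)..1, g l * B l) = B 1 - B 0 :=
    intervalIntegral.integral_eq_sub_of_hasDerivAt
      (fun x _ => hBderiv x) ((hgc.mul hBcont).intervalIntegrable _ _)
  have hB0 : B 0 = 1 := by simp [hB]
  -- rewrite LHS with B
  have hLHS : (∫ l in (0:ℝ)..1, s l * A l) = ∫ l in (0:ℝ)..1, s l * B l := by
    apply intervalIntegral.integral_congr
    intro x hx
    rw [uIcc_of_le h01] at hx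
    show s x * A x = s x * B x
    rw [hBA x hx]
  rw [hLHS]
  have hmono : (∫ l in (0:ℝ)..1, s l * B l) ≤
      ∫ l in (0:ℝ)..1, -(1/4) * (g l * B l) := by
    apply intervalIntegral.integral_mono_on h01
    · exact ((hs.mul hBcont.continuousOn).intervalIntegrable_of_Icc h01)
    · exact (continuous_const.mul (hgc.mul hBcont)).intervalIntegrable _ _
    · intro x hx
      have hBpos : 0 < B x := Real.exp_pos _
      have h1 : s x ≤ -θ x / 4 := hcond x hx
      have h2 : g x = θ x := hgeq x hx
      rw [h2]
      nlinarith
  calc (∫ l in (0:ℝ)..1, s l * B l)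
      ≤ ∫ l in (0:ℝ)..1, -(1/4) * (g l * B l) := hmono
    _ = -(1/4) * (B 1 - B 0) := by
        rw [intervalIntegral.integral_const_mul, hftc]
    _ = (1/4) * (1 - A 1) := by
        rw [hB0, hBA 1 (by norm_num : (1:ℝ) ∈ Icc (0:ℝ) 1)]; ring
end

section
/- Let (B, μ) be a finite measure space, let θ, s : B × ℝ → ℝ be measurable, with λ ↦ θ(x,λ) and λ ↦ s(x,λ) continuous on [0,1] for each x and the relevant functions integrable over B × [0,1], let A(x,λ) = exp(∫₀^λ θ(x,μ) dμ), and let λ∞ : B → [0,1] be measurable. If s(x,λ) ≤ -θ(x,λ)/4 for every x ∈ B and every λ ∈ [0, λ∞(x)], then ∫_B ∫₀^{λ∞(x)} s(x,λ)·A(x,λ) dλ dμ(x) ≤ (1/4)·(μ(B) - ∫_B A(x, λ∞(x)) dμ(x)). -/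
open Set MeasureTheory intervalIntegral

/-- Sufficiency direction of Proposition 1: on a light sheet over a base
surface `B` with finite area measure `μ`, if `s(x,λ) ≤ -θ(x,λ)/4` holds
everywhere along each generator up to its endpoint `λ∞ x`, then the total
entropy through the light sheet is bounded by one quarter of the area
decrease `μ(B) - A_{B'}`. -/
theorem generalized_entropy_bound_light_sheet
    {B : Type*} [MeasurableSpace B] (μ : Measure B) [IsFiniteMeasure μ]
    (θ s : B × ℝ → ℝ)
    (hθmeas : Measurable θ) (hsmeas : Measurable s)
    (hθcont : ∀ x : B, ContinuousOn (fun l => θ (x, l)) (Icc 0 1))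
    (hscont : ∀ x : B, ContinuousOn (fun l => s (x, l)) (Icc 0 1))
    (A : B × ℝ → ℝ)
    (hA : ∀ x : B, ∀ l : ℝ, A (x, l) = Real.exp (∫ m in (0:ℝ)..l, θ (x, m)))
    (lInf : B → ℝ) (hlInf : Measurable lInf)
    (hlInfmem : ∀ x : B, lInf x ∈ Icc (0:ℝ) 1)
    -- integrability of the relevant functions
    (hint₁ : Integrable (fun p : B × ℝ => s p * A p)
      (μ.prod (volume.restrict (Icc (0:ℝ) 1))))
    (hint₂ : Integrable (fun x : B => ∫ l in (0:ℝ)..(lInf x), s (x, l) * A (x, l)) μ)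
    (hint₃ : Integrable (fun x : B => A (x, lInf x)) μ)
    -- condition (A) along each generator
    (hcond : ∀ x : B, ∀ l ∈ Icc (0:ℝ) (lInf x), s (x, l) ≤ -θ (x, l) / 4) :
    (∫ x, (∫ l in (0:ℝ)..(lInf x), s (x, l) * A (x, l)) ∂μ)
      ≤ (1/4) * ((μ univ).toReal - ∫ x, A (x, lInf x) ∂μ) := by
  -- pointwise bound: for each x, ∫₀^{lInf x} s·A ≤ (1/4)(1 - A(x, lInf x))
  have key : ∀ x : B, (∫ l in (0:ℝ)..(lInf x), s (x, l) * A (x, l))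
      ≤ (1/4) * (1 - A (x, lInf x)) := by
    intro x
    obtain ⟨hb0, hb1⟩ := hlInfmem x
    set b := lInf x with hbdef
    have hsub : Icc (0:ℝ) b ⊆ Icc 0 1 := Icc_subset_Icc le_rfl hb1
    -- A(x,·) is continuous on [0,b]
    have hθint : IntegrableOn (fun l => θ (x, l)) (Icc 0 b) :=
      ((hθcont x).mono hsub).integrableOn_compact isCompact_Icc
    have hGcont : ContinuousOn (fun l => ∫ m in (0:ℝ)..l, θ (x, m)) (Icc 0 b) := by
      have h1 : IntegrableOn (fun l => θ (x, l)) (uIcc (0:ℝ) b) volume := by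
        simpa [uIcc_of_le hb0] using hθint
      have := intervalIntegral.continuousOn_primitive_interval (μ := volume) h1
      simpa [uIcc_of_le hb0] using this
    have hAcont : ContinuousOn (fun l => A (x, l)) (Icc 0 b) := by
      have : ContinuousOn (fun l => Real.exp (∫ m in (0:ℝ)..l, θ (x, m))) (Icc 0 b) :=
        Real.continuous_exp.comp_continuousOn hGcont
      simpa [hA] using this
    have hApos : ∀ l, 0 < A (x, l) := fun l => by rw [hA]; exact Real.exp_pos _
    -- derivative of A(x,·) on Ioo 0 b
    have hAderiv : ∀ l ∈ Ioo (0:ℝ) b, HasDerivAt (fun l => A (x, l)) (θ (x, l) * A (x, l)) l := by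
      intro l hl
      have hlmem : Icc (0:ℝ) 1 ∈ nhds l :=
        Icc_mem_nhds (by linarith [hl.1]) (by linarith [hl.2])
      have hG : HasDerivAt (fun u => ∫ m in (0:ℝ)..u, θ (x, m)) (θ (x, l)) l := by
        apply intervalIntegral.integral_hasDerivAt_right
        · exact ((hθcont x).mono (fun m hm => hsub (by
            simpa [uIcc_of_le (le_of_lt hl.1)] using
              Icc_subset_Icc le_rfl hl.2.le (by simpa [uIcc_of_le hl.1.le] using hm)))).intervalIntegrable
        · exact ⟨Icc (0:ℝ) 1, hlmem,
            (hθmeas.comp measurable_prodMk_left).stronglyMeasurable.aestronglyMeasurable⟩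
        · exact (hθcont x).continuousAt hlmem
      have := hG.exp
      have heq : (fun l => A (x, l)) = fun u => Real.exp (∫ m in (0:ℝ)..u, θ (x, m)) := by
        funext u; exact hA x u
      rw [heq, hA x l]
      simpa [mul_comm] using this
    -- integrability of s·A on [0,b]
    have hsAint : IntegrableOn (fun l => s (x, l) * A (x, l)) (Icc 0 b) :=
      ((((hscont x).mono hsub).mul hAcont)).integrableOn_compact isCompact_Icc
    -- apply FTC comparison with g = -(1/4) A(x,·)
    have hmain : (∫ l in (0:ℝ)..b, s (x, l) * A (x, l))
        ≤ (-(1/4) * A (x, b)) - (-(1/4) * A (x, 0)) := by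
      apply intervalIntegral.integral_le_sub_of_hasDeriv_right_of_le hb0
        (g := fun l => -(1/4) * A (x, l)) (g' := fun l => -(1/4) * (θ (x, l) * A (x, l)))
      · exact continuousOn_const.mul hAcont
      · intro l hl
        exact ((hAderiv l hl).const_mul (-(1/4))).hasDerivWithinAt
      · exact hsAint
      · intro l hl
        have h1 := hcond x l ⟨hl.1.le, hl.2.le⟩
        have h2 := (hApos l).le
        nlinarith [hApos l]
    have hA0 : A (x, 0) = 1 := by rw [hA]; simp
    rw [hA0] at hmain
    linarith
  -- integrate the pointwise bound
  have hrhsint : Integrable (fun x => (1/4) * (1 - A (x, lInf x))) μ :=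
    ((integrable_const (1:ℝ)).sub hint₃).const_mul _
  calc (∫ x, (∫ l in (0:ℝ)..(lInf x), s (x, l) * A (x, l)) ∂μ)
      ≤ ∫ x, (1/4) * (1 - A (x, lInf x)) ∂μ :=
        integral_mono hint₂ hrhsint fun x => key x
    _ = (1/4) * ((μ univ).toReal - ∫ x, A (x, lInf x) ∂μ) := by
        rw [MeasureTheory.integral_const_mul, integral_sub (integrable_const 1) hint₃]
        simp [MeasureTheory.integral_const, smul_eq_mul, Measure.real]
end

section
/- Let ε > 0, let θ, s : ℝ → ℝ be continuous on [0, ε), and let A(λ) = exp(∫₀^λ θ(μ) dμ) be the associated area-decreasing factor. If for every Δ ∈ (0, ε) one has ∫₀^Δ s(λ)·A(λ) dλ ≤ (1/4)·(1 - A(Δ)), then s(0) ≤ -θ(0)/4. -/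
open Set intervalIntegral
open Filter Topology MeasureTheory

/-- Necessity direction of Proposition 1 in local single-generator form:
if the generalized covariant entropy bound holds for all arbitrarily short
light sheets starting at a point, then `s(0) ≤ -θ(0)/4`. -/
theorem entropy_bound_necessity_local
    (ε : ℝ) (hε : 0 < ε)
    (θ s : ℝ → ℝ)
    (hθ : ContinuousOn θ (Ico 0 ε))
    (hs : ContinuousOn s (Ico 0 ε))
    (A : ℝ → ℝ)
    (hA : ∀ l : ℝ, A l = Real.exp (∫ μ in (0:ℝ)..l, θ μ))
    (hbound : ∀ Δ ∈ Ioo (0:ℝ) ε,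
      (∫ l in (0:ℝ)..Δ, s l * A l) ≤ (1/4) * (1 - A Δ)) :
    s 0 ≤ -θ 0 / 4 := by
  set c : ℝ := ε / 2 with hc
  have hc0 : 0 < c := by positivity
  have hcε : c < ε := by simp [hc]; linarith
  have hIccsub : Icc (0:ℝ) c ⊆ Ico 0 ε := fun x hx => ⟨hx.1, lt_of_le_of_lt hx.2 hcε⟩
  have hIccmem : Icc (0:ℝ) c ∈ 𝓝[>] (0:ℝ) :=
    mem_of_superset (Ioo_mem_nhdsGT_of_mem ⟨le_refl 0, hc0⟩) Ioo_subset_Icc_self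
  have hIccmem' : Icc (0:ℝ) c ∈ 𝓝[≥] (0:ℝ) :=
    mem_of_superset (Ico_mem_nhdsGE_of_mem ⟨le_refl 0, hc0⟩) Ico_subset_Icc_self
  have hθc : ContinuousOn θ (Icc 0 c) := hθ.mono hIccsub
  have hsc : ContinuousOn s (Icc 0 c) := hs.mono hIccsub
  -- primitive of θ
  set I : ℝ → ℝ := fun l => ∫ μ in (0:ℝ)..l, θ μ with hIdef
  have hθint : IntegrableOn θ (Icc 0 c) := hθc.integrableOn_Icc
  have hIcont : ContinuousOn I (Icc 0 c) := by
    have := continuousOn_primitive_interval (a := (0:ℝ)) (b := c) (f := θ)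
      (μ := MeasureTheory.volume) (by rwa [uIcc_of_le hc0.le])
    rwa [uIcc_of_le hc0.le] at this
  have hAcont : ContinuousOn A (Icc 0 c) := by
    have : ContinuousOn (fun l => Real.exp (I l)) (Icc 0 c) :=
      Real.continuous_exp.comp_continuousOn hIcont
    exact this.congr fun x _ => hA x
  -- derivative of I at 0 from the right
  have hmeasθ : StronglyMeasurableAtFilter θ (𝓝[>] (0:ℝ)) MeasureTheory.volume :=
    ⟨Icc 0 c, hIccmem, hθc.aestronglyMeasurable measurableSet_Icc⟩
  have hθcw : ContinuousWithinAt θ (Ioi 0) 0 :=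
    ((hθc.continuousWithinAt (left_mem_Icc.2 hc0.le)).mono_of_mem_nhdsWithin hIccmem)
  have hI0 : HasDerivWithinAt I (θ 0) (Ici 0) 0 :=
    intervalIntegral.integral_hasDerivWithinAt_right
      ((hθint.mono_set (by simp [uIcc_of_le (le_refl (0:ℝ)), hc0.le])).intervalIntegrable) hmeasθ hθcw
  -- derivative of A at 0 from the right
  have hI00 : I 0 = 0 := intervalIntegral.integral_same
  have hA0 : A 0 = 1 := by rw [hA]; simp
  have hAderiv : HasDerivWithinAt A (θ 0) (Ici 0) 0 := by
    have h1 : HasDerivWithinAt (fun l => Real.exp (I l)) (Real.exp (I 0) * θ 0) (Ici 0) 0 :=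
      (Real.hasDerivAt_exp (I 0)).comp_hasDerivWithinAt 0 hI0
    rw [hI00, Real.exp_zero, one_mul] at h1
    exact h1.congr (fun x _ => hA x) (hA 0)
  -- derivative of the entropy integral at 0 from the right
  set g : ℝ → ℝ := fun l => s l * A l with hgdef
  have hgcont : ContinuousOn g (Icc 0 c) := hsc.mul hAcont
  have hmeasg : StronglyMeasurableAtFilter g (𝓝[>] (0:ℝ)) MeasureTheory.volume :=
    ⟨Icc 0 c, hIccmem, hgcont.aestronglyMeasurable measurableSet_Icc⟩
  have hgcw : ContinuousWithinAt g (Ioi 0) 0 :=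
    (hgcont.continuousWithinAt (left_mem_Icc.2 hc0.le)).mono_of_mem_nhdsWithin hIccmem
  set G : ℝ → ℝ := fun Δ => ∫ l in (0:ℝ)..Δ, g l with hGdef
  have hGderiv : HasDerivWithinAt G (g 0) (Ici 0) 0 :=
    intervalIntegral.integral_hasDerivWithinAt_right
      (((hgcont.integrableOn_Icc).mono_set (by simp [uIcc_of_le (le_refl (0:ℝ)), hc0.le])).intervalIntegrable) hmeasg hgcw
  have hg0 : g 0 = s 0 := by simp [hgdef, hA0]
  -- the difference function F
  set F : ℝ → ℝ := fun Δ => G Δ - (1/4) * (1 - A Δ) with hFdef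
  have hFderiv : HasDerivWithinAt F (s 0 + θ 0 / 4) (Ici 0) 0 := by
    have := hGderiv.sub ((hasDerivWithinAt_const (0:ℝ) (Ici (0:ℝ)) (1/4 : ℝ)).mul
      ((hasDerivWithinAt_const (0:ℝ) (Ici (0:ℝ)) (1:ℝ)).sub hAderiv))
    refine this.congr_deriv ?_
    rw [hg0]; ring
  have hF0 : F 0 = 0 := by
    simp [hFdef, hGdef, hA0, intervalIntegral.integral_same]
  -- F ≤ 0 on (0, ε)
  have hFle : ∀ x ∈ Ioo (0:ℝ) ε, F x ≤ 0 := fun x hx =>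
    sub_nonpos.2 (hbound x hx)
  -- slope argument
  have hslope : Filter.Tendsto (slope F 0) (𝓝[>] (0:ℝ)) (𝓝 (s 0 + θ 0 / 4)) := by
    have := hasDerivWithinAt_iff_tendsto_slope.1 hFderiv
    rwa [Ici_sdiff_left] at this
  have hkey : s 0 + θ 0 / 4 ≤ 0 := by
    refine le_of_tendsto hslope ?_
    filter_upwards [Ioo_mem_nhdsGT_of_mem (left_mem_Ico.2 hε)] with x hx
    have hx0 : 0 < x := hx.1
    rw [slope_def_field, hF0]
    have := hFle x hx
    have h2 : (F x - 0) / (x - 0) ≤ 0 := div_nonpos_of_nonpos_of_nonneg (by linarith) (by linarith)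
    simpa [div_eq_inv_mul] using h2
  linarith
end

section
/- Let G : ℝ → ℝ be twice continuously differentiable on [0,1] with G(λ) > 0 for all λ ∈ [0,1], let s : ℝ → ℝ be continuously differentiable on [0,1], and let T : ℝ → ℝ. Assume: (a) G''(λ) ≤ -4π·T(λ)·G(λ) for all λ ∈ [0,1]; (b) s'(λ) ≤ 2π·T(λ) for all λ ∈ [0,1]; and (c) s(0) ≤ -G'(0)/(2·G(0)). Then s(λ) ≤ -G'(λ)/(2·G(λ)) for all λ ∈ [0,1]. -/
open Set

/-- The paper's Remark on the Strominger–Thompson conditions: with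
`G = √A` (so `θ = 2G'/G`), conditions (a) `G'' ≤ -4πTG` (Raychaudhuri +
Einstein), (b) `s' ≤ 2πT` and (c) `s(0) ≤ -G'(0)/(2G(0))` imply
`s ≤ -G'/(2G)` on the whole light sheet `[0,1]`. -/
theorem strominger_thompson_remark
    (G G' G'' s s' T : ℝ → ℝ)
    (hGpos : ∀ l ∈ Icc (0:ℝ) 1, 0 < G l)
    (hG' : ∀ l ∈ Icc (0:ℝ) 1, HasDerivAt G (G' l) l)
    (hG'' : ∀ l ∈ Icc (0:ℝ) 1, HasDerivAt G' (G'' l) l)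
    (hG''cont : ContinuousOn G'' (Icc 0 1))
    (hs' : ∀ l ∈ Icc (0:ℝ) 1, HasDerivAt s (s' l) l)
    (hs'cont : ContinuousOn s' (Icc 0 1))
    (ha : ∀ l ∈ Icc (0:ℝ) 1, G'' l ≤ -(4 * Real.pi) * T l * G l)
    (hb : ∀ l ∈ Icc (0:ℝ) 1, s' l ≤ 2 * Real.pi * T l)
    (hc : s 0 ≤ -G' 0 / (2 * G 0)) :
    ∀ l ∈ Icc (0:ℝ) 1, s l ≤ -G' l / (2 * G l) := by
  set F : ℝ → ℝ := fun l => s l + G' l / (2 * G l) with hFdef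
  set F' : ℝ → ℝ := fun l =>
    s' l + (G'' l * (2 * G l) - G' l * (2 * G' l)) / (2 * G l) ^ 2 with hF'def
  have hF : ∀ l ∈ Icc (0:ℝ) 1, HasDerivAt F (F' l) l := by
    intro l hl
    have hne : 2 * G l ≠ 0 := by have := hGpos l hl; positivity
    exact (hs' l hl).add (((hG'' l hl).div ((hG' l hl).const_mul 2) hne))
  have hF'nonpos : ∀ l ∈ Icc (0:ℝ) 1, F' l ≤ 0 := by
    intro l hl
    have hg := hGpos l hl
    have h1 := ha l hl
    have h2 := hb l hl
    have hD : (0:ℝ) < (2 * G l) ^ 2 := by positivity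
    have : (G'' l * (2 * G l) - G' l * (2 * G' l)) / (2 * G l) ^ 2 ≤ -s' l := by
      rw [div_le_iff₀ hD]
      nlinarith [sq_nonneg (G' l), mul_le_mul_of_nonneg_right h1 hg.le]
    simp only [hF'def]
    linarith
  have hcont : ContinuousOn F (Icc 0 1) := fun l hl =>
    (hF l hl).continuousAt.continuousWithinAt
  have hanti : AntitoneOn F (Icc 0 1) := by
    apply antitoneOn_of_deriv_nonpos (convex_Icc 0 1) hcont
    · intro l hl
      rw [interior_Icc] at hl
      exact (hF l (Ioo_subset_Icc_self hl)).differentiableAt.differentiableWithinAt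
    · intro l hl
      rw [interior_Icc] at hl
      rw [(hF l (Ioo_subset_Icc_self hl)).deriv]
      exact hF'nonpos l (Ioo_subset_Icc_self hl)
  intro l hl
  have h0 : (0:ℝ) ∈ Icc (0:ℝ) 1 := by norm_num
  have hle : F l ≤ F 0 := hanti h0 hl hl.1
  have hc' : F 0 ≤ 0 := by
    simp only [hFdef]
    rw [neg_div] at hc
    linarith
  have : s l + G' l / (2 * G l) ≤ 0 := le_trans hle hc'
  rw [neg_div]
  linarith
end

section
/- Let G : ℝ → ℝ be twice continuously differentiable on [0,1] with G(λ) > 0 for all λ ∈ [0,1] and G(0) = 1, let s : ℝ → ℝ be continuously differentiable on [0,1], and let T : ℝ → ℝ. Assume: (a) G''(λ) ≤ -4π·T(λ)·G(λ) for all λ ∈ [0,1]; (b) s'(λ) ≤ 2π·T(λ) for all λ ∈ [0,1]; and (c) s(0) ≤ -G'(0)/(2·G(0)). Then ∫₀¹ s(λ)·G(λ)² dλ ≤ (1/4)·(1 - G(1)²). -/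
open Set intervalIntegral

/-- The generalized covariant entropy bound along a single null generator
derived from the Strominger–Thompson conditions: with `G = √A`, `G(0) = 1`,
conditions (a) `G'' ≤ -4πTG`, (b) `s' ≤ 2πT` and (c) `s(0) ≤ -G'(0)/(2G(0))`
imply `∫₀¹ s G² ≤ (1/4)(1 - G(1)²)`. -/
theorem strominger_thompson_entropy_bound
    (G G' G'' s s' T : ℝ → ℝ)
    (hGpos : ∀ l ∈ Icc (0:ℝ) 1, 0 < G l)
    (hG0 : G 0 = 1)
    (hG'd : ∀ l ∈ Icc (0:ℝ) 1, HasDerivAt G (G' l) l)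
    (hG''d : ∀ l ∈ Icc (0:ℝ) 1, HasDerivAt G' (G'' l) l)
    (hG''cont : ContinuousOn G'' (Icc 0 1))
    (hs'd : ∀ l ∈ Icc (0:ℝ) 1, HasDerivAt s (s' l) l)
    (hs'cont : ContinuousOn s' (Icc 0 1))
    (ha : ∀ l ∈ Icc (0:ℝ) 1, G'' l ≤ -(4 * Real.pi) * T l * G l)
    (hb : ∀ l ∈ Icc (0:ℝ) 1, s' l ≤ 2 * Real.pi * T l)
    (hc : s 0 ≤ -G' 0 / (2 * G 0)) :
    (∫ l in (0:ℝ)..1, s l * (G l) ^ 2) ≤ (1/4) * (1 - (G 1) ^ 2) := by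
  have hsub : uIcc (0:ℝ) 1 = Icc 0 1 := uIcc_of_le zero_le_one
  set σ : ℝ → ℝ := fun l => -G' l / (2 * G l) with hσdef
  have hGne : ∀ l ∈ Icc (0:ℝ) 1, (2 : ℝ) * G l ≠ 0 := fun l hl => by
    have := hGpos l hl; positivity
  have hGc : ContinuousOn G (Icc 0 1) := fun l hl =>
    (hG'd l hl).continuousAt.continuousWithinAt
  have hG'c : ContinuousOn G' (Icc 0 1) := fun l hl =>
    (hG''d l hl).continuousAt.continuousWithinAt
  have hsc : ContinuousOn s (Icc 0 1) := fun l hl =>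
    (hs'd l hl).continuousAt.continuousWithinAt
  have hσc : ContinuousOn σ (Icc 0 1) :=
    hG'c.neg.div (continuousOn_const.mul hGc) hGne
  -- derivative of σ
  have hσd : ∀ l ∈ Icc (0:ℝ) 1, HasDerivAt σ
      ((-G'' l * (2 * G l) - -G' l * (2 * G' l)) / (2 * G l) ^ 2) l := by
    intro l hl
    exact (hG''d l hl).neg.div ((hG'd l hl).const_mul 2) (hGne l hl)
  -- s ≤ σ on [0,1]
  have key : ∀ l ∈ Icc (0:ℝ) 1, s l ≤ σ l := by
    have hmono : MonotoneOn (fun l => σ l - s l) (Icc 0 1) := by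
      have hint : interior (Icc (0:ℝ) 1) = Ioo 0 1 := interior_Icc
      apply monotoneOn_of_deriv_nonneg (convex_Icc 0 1) (hσc.sub hsc)
      · intro x hx
        rw [hint] at hx
        have hx' : x ∈ Icc (0:ℝ) 1 := Ioo_subset_Icc_self hx
        exact ((hσd x hx').sub (hs'd x hx')).differentiableAt.differentiableWithinAt
      · intro x hx
        rw [hint] at hx
        have hx' : x ∈ Icc (0:ℝ) 1 := Ioo_subset_Icc_self hx
        rw [((hσd x hx').sub (hs'd x hx')).deriv]
        have hg := hGpos x hx'
        have h1 := ha x hx'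
        have h2 := hb x hx'
        rw [sub_nonneg, le_div_iff₀ (by positivity : (0:ℝ) < (2 * G x) ^ 2)]
        nlinarith [sq_nonneg (G' x), mul_pos hg hg]
    intro l hl
    have h0 : (0:ℝ) ∈ Icc (0:ℝ) 1 := by norm_num
    have := hmono h0 hl hl.1
    have hσ0 : s 0 ≤ σ 0 := hc
    simp only at this
    linarith
  -- integrability
  have int1 : IntervalIntegrable (fun l => s l * G l ^ 2) MeasureTheory.volume 0 1 := by
    apply ContinuousOn.intervalIntegrable
    rw [hsub]; exact hsc.mul (hGc.pow 2)
  have int2 : IntervalIntegrable (fun l => σ l * G l ^ 2) MeasureTheory.volume 0 1 := by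
    apply ContinuousOn.intervalIntegrable
    rw [hsub]; exact hσc.mul (hGc.pow 2)
  have hmono_int : (∫ l in (0:ℝ)..1, s l * G l ^ 2) ≤ ∫ l in (0:ℝ)..1, σ l * G l ^ 2 := by
    apply integral_mono_on zero_le_one int1 int2
    intro l hl
    exact mul_le_mul_of_nonneg_right (key l hl) (sq_nonneg _)
  -- compute ∫ σ G²
  have hFTC : (∫ l in (0:ℝ)..1, σ l * G l ^ 2) = -(G 1) ^ 2 / 4 - -(G 0) ^ 2 / 4 := by
    apply integral_eq_sub_of_hasDerivAt (f := fun l => -(G l) ^ 2 / 4)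
    · intro x hx
      rw [hsub] at hx
      have hd : HasDerivAt (fun l => -(G l) ^ 2 / 4)
          (-(2 * G x ^ 1 * G' x) / 4) x := (((hG'd x hx).pow 2).neg).div_const 4
      refine hd.congr_deriv ?_
      have := hGpos x hx
      simp only [hσdef]
      field_simp
      ring
    · rw [hsub] at *
      exact int2
  rw [hFTC, hG0] at hmono_int
  linarith
end

section
/- For all real β > 0, γ > 0, and T > 0, ∫₀^∞ ω²·log(1 - e^{-γ·ω^β/T}) dω = -(1/β)·(T/γ)^{3/β}·Γ(3/β)·ζ(1 + 3/β), where Γ is the Gamma function and ζ is the Riemann zeta function. -/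
open Set MeasureTheory Real

private lemma integrableOn_aux {s c : ℝ} (hs : 0 < s) (hc : 0 < c) :
    IntegrableOn (fun x : ℝ => x ^ (s - 1) * Real.exp (-(c * x))) (Ioi 0) := by
  have h := Real.GammaIntegral_convergent hs
  have h2 : IntegrableOn (fun x : ℝ => Real.exp (-(c * x)) * (c * x) ^ (s - 1)) (Ioi 0) := by
    have := (integrableOn_Ioi_comp_mul_left_iff
      (fun x : ℝ => Real.exp (-x) * x ^ (s - 1)) 0 hc).mpr (by simpa using h)
    simpa using this
  have h3 : IntegrableOn (fun x : ℝ => c ^ (1 - s) * (Real.exp (-(c * x)) * (c * x) ^ (s - 1)))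
      (Ioi 0) := h2.const_mul (c ^ (1 - s))
  refine IntegrableOn.congr_fun h3 (fun x hx => ?_) measurableSet_Ioi
  have hx0 : (0:ℝ) < x := hx
  rw [Real.mul_rpow hc.le hx0.le,
    show c ^ (1 - s) * (Real.exp (-(c * x)) * (c ^ (s - 1) * x ^ (s - 1)))
        = (c ^ (1 - s) * c ^ (s - 1)) * (x ^ (s - 1) * Real.exp (-(c * x))) from by ring,
    ← Real.rpow_add hc]
  norm_num

private lemma key_integral (s a : ℝ) (hs : 0 < s) (ha : 0 < a) :
    ∫ x in Ioi (0:ℝ), x ^ (s - 1) * Real.log (1 - Real.exp (-(a * x)))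
      = -(a ^ (-s) * Real.Gamma s * ∑' n : ℕ, (((n:ℝ) + 1) ^ (s + 1))⁻¹) := by
  set F : ℕ → ℝ → ℝ := fun n x =>
    -(x ^ (s - 1) * Real.exp (-((((n:ℝ) + 1) * a) * x)) / ((n:ℝ) + 1)) with hF
  have hc : ∀ n : ℕ, (0:ℝ) < ((n:ℝ) + 1) * a := fun n => by positivity
  have hn1 : ∀ n : ℕ, (0:ℝ) < (n:ℝ) + 1 := fun n => by positivity
  have hint : ∀ n : ℕ, Integrable (F n) (volume.restrict (Ioi (0:ℝ))) := fun n =>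
    ((integrableOn_aux hs (hc n)).div_const ((n:ℝ) + 1)).neg
  have hterm : ∀ n : ℕ, (1 / (((n:ℝ) + 1) * a)) ^ s * Real.Gamma s / ((n:ℝ) + 1)
      = (a ^ (-s) * Real.Gamma s) * (((n:ℝ) + 1) ^ (s + 1))⁻¹ := by
    intro n
    have hn := hn1 n
    have h1 := (Real.rpow_pos_of_pos hn s).ne'
    have h2 := (Real.rpow_pos_of_pos ha s).ne'
    rw [one_div, Real.inv_rpow (hc n).le, Real.mul_rpow hn.le ha.le,
      Real.rpow_add hn, Real.rpow_one, Real.rpow_neg ha.le, mul_inv, mul_inv]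
    ring
  have hval : ∀ n : ℕ, ∫ x in Ioi (0:ℝ), F n x
      = -((a ^ (-s) * Real.Gamma s) * (((n:ℝ) + 1) ^ (s + 1))⁻¹) := by
    intro n
    simp only [hF]
    rw [integral_neg]
    rw [show (fun x : ℝ => x ^ (s - 1) * Real.exp (-((((n:ℝ) + 1) * a) * x)) / ((n:ℝ) + 1))
        = (fun x : ℝ => (x ^ (s - 1) * Real.exp (-((((n:ℝ) + 1) * a) * x))) * (((n:ℝ) + 1))⁻¹)
      from funext fun x => by ring]
    rw [integral_mul_const, integral_rpow_mul_exp_neg_mul_Ioi hs (hc n)]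
    rw [← hterm n]
    ring
  have hnorm : ∀ n : ℕ, ∫ x in Ioi (0:ℝ), ‖F n x‖
      = (a ^ (-s) * Real.Gamma s) * (((n:ℝ) + 1) ^ (s + 1))⁻¹ := by
    intro n
    have heq : ∀ x ∈ Ioi (0:ℝ), ‖F n x‖
        = (x ^ (s - 1) * Real.exp (-((((n:ℝ) + 1) * a) * x))) * (((n:ℝ) + 1))⁻¹ := by
      intro x hx
      have hx0 : (0:ℝ) < x := hx
      have hA : 0 ≤ x ^ (s - 1) * Real.exp (-((((n:ℝ) + 1) * a) * x)) * (((n:ℝ) + 1))⁻¹ := by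
        positivity
      rw [hF]
      simp only [norm_neg, Real.norm_eq_abs, div_eq_mul_inv]
      exact abs_of_nonneg hA
    rw [setIntegral_congr_fun measurableSet_Ioi heq, integral_mul_const,
      integral_rpow_mul_exp_neg_mul_Ioi hs (hc n), ← hterm n]
    ring
  have hsumS : Summable (fun n : ℕ => (((n:ℝ) + 1) ^ (s + 1))⁻¹) := by
    have hsum0 : Summable (fun n : ℕ => ((n:ℝ)) ^ (-(s + 1))) :=
      Real.summable_nat_rpow.mpr (by linarith)
    have hsum1 := (summable_nat_add_iff (f := fun n : ℕ => ((n:ℝ)) ^ (-(s + 1))) 1).mpr hsum0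
    refine (hsum1.congr fun n => ?_)
    push_cast
    rw [Real.rpow_neg (hn1 n).le]
  have hsum_norm : Summable (fun n : ℕ => ∫ x in Ioi (0:ℝ), ‖F n x‖) := by
    simp_rw [hnorm]
    exact hsumS.mul_left _
  have hswap := MeasureTheory.integral_tsum_of_summable_integral_norm hint hsum_norm
  have hpt : ∀ x ∈ Ioi (0:ℝ),
      (∑' n : ℕ, F n x) = x ^ (s - 1) * Real.log (1 - Real.exp (-(a * x))) := by
    intro x hx
    have hx0 : (0:ℝ) < x := hx
    have hlt : |Real.exp (-(a * x))| < 1 := by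
      rw [abs_of_pos (Real.exp_pos _)]
      rw [Real.exp_lt_one_iff]
      nlinarith
    have h0 := hasSum_pow_div_log_of_abs_lt_one hlt
    have h1 := h0.mul_left (-(x ^ (s - 1)))
    have h2 : HasSum (fun n : ℕ => F n x)
        (x ^ (s - 1) * Real.log (1 - Real.exp (-(a * x)))) := by
      convert h1 using 1
      · rfl
      · funext n
        show -(x ^ (s - 1) * Real.exp (-((((n:ℝ) + 1) * a) * x)) / ((n:ℝ) + 1))
            = -x ^ (s - 1) * (Real.exp (-(a * x)) ^ (n + 1) / ((n:ℝ) + 1))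
        have hE : Real.exp (-(a * x)) ^ (n + 1) = Real.exp (-((((n:ℝ) + 1) * a) * x)) := by
          rw [← Real.exp_nat_mul]
          congr 1
          push_cast
          ring
        rw [hE]
        ring
      · ring
    exact h2.tsum_eq
  calc ∫ x in Ioi (0:ℝ), x ^ (s - 1) * Real.log (1 - Real.exp (-(a * x)))
      = ∫ x in Ioi (0:ℝ), ∑' n : ℕ, F n x :=
        (setIntegral_congr_fun measurableSet_Ioi hpt).symm
    _ = ∑' n : ℕ, ∫ x in Ioi (0:ℝ), F n x := hswap.symm
    _ = ∑' n : ℕ, -((a ^ (-s) * Real.Gamma s) * (((n:ℝ) + 1) ^ (s + 1))⁻¹) := by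
        exact tsum_congr hval
    _ = -(a ^ (-s) * Real.Gamma s * ∑' n : ℕ, (((n:ℝ) + 1) ^ (s + 1))⁻¹) := by
        rw [tsum_neg, tsum_mul_left]

/-- Eq. (26) of the paper (up to the prefactor `TV/2π²`): the free-energy
integral for a Bose gas with dispersion relation `ε = γ ω^β`,
`∫₀^∞ ω² log(1 - e^(-γω^β/T)) dω = -(1/β) (T/γ)^(3/β) Γ(3/β) ζ(1 + 3/β)`. -/
theorem free_energy_integral (β γ T : ℝ) (hβ : 0 < β) (hγ : 0 < γ) (hT : 0 < T) :
    ((∫ ω in Ioi (0:ℝ), ω ^ 2 * Real.log (1 - Real.exp (-(γ * ω ^ β / T))) : ℝ) : ℂ)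
      = -((1 / β : ℝ) : ℂ) * (((T / γ) ^ ((3 : ℝ) / β) : ℝ) : ℂ)
          * (Real.Gamma (3 / β) : ℂ) * riemannZeta (1 + (3 : ℂ) / (β : ℂ)) := by
  set a : ℝ := γ / T with ha_def
  have ha : 0 < a := div_pos hγ hT
  have hs : 0 < 3 / β := by positivity
  -- Step 1: rewrite the integrand
  have step1 : (∫ ω in Ioi (0:ℝ), ω ^ 2 * Real.log (1 - Real.exp (-(γ * ω ^ β / T))))
      = ∫ ω in Ioi (0:ℝ), ω ^ 2 * Real.log (1 - Real.exp (-(a * ω ^ β))) := by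
    refine setIntegral_congr_fun measurableSet_Ioi (fun ω _ => ?_)
    rw [ha_def, div_mul_eq_mul_div]
  -- Step 2: change of variables ω = x^(1/β)
  have hβne : (1 / β : ℝ) ≠ 0 := by positivity
  have step2 : (∫ ω in Ioi (0:ℝ), ω ^ 2 * Real.log (1 - Real.exp (-(a * ω ^ β))))
      = ∫ x in Ioi (0:ℝ), (1 / β) * (x ^ (3 / β - 1) * Real.log (1 - Real.exp (-(a * x)))) := by
    rw [← integral_comp_rpow_Ioi
        (fun ω : ℝ => ω ^ 2 * Real.log (1 - Real.exp (-(a * ω ^ β)))) hβne]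
    refine setIntegral_congr_fun measurableSet_Ioi (fun x hx => ?_)
    have hx0 : (0:ℝ) < x := hx
    have e1 : (x ^ (1 / β)) ^ β = x := by
      rw [← Real.rpow_mul hx0.le, one_div_mul_cancel hβ.ne', Real.rpow_one]
    have e2 : (x ^ (1 / β)) ^ (2:ℕ) = x ^ ((1 / β) * 2) := by
      rw [← Real.rpow_natCast (x ^ (1 / β)) 2, ← Real.rpow_mul hx0.le]
      norm_num
    rw [smul_eq_mul, e1, e2, abs_of_pos (by positivity : (0:ℝ) < 1 / β)]
    rw [show (1 / β) * x ^ (1 / β - 1) * (x ^ ((1 / β) * 2) * Real.log (1 - Real.exp (-(a * x))))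
        = (1 / β) * ((x ^ (1 / β - 1) * x ^ ((1 / β) * 2)) * Real.log (1 - Real.exp (-(a * x))))
      from by ring]
    rw [← Real.rpow_add hx0]
    congr 3
    field_simp
    ring
  have step3 : (∫ x in Ioi (0:ℝ), (1 / β) * (x ^ (3 / β - 1) * Real.log (1 - Real.exp (-(a * x)))))
      = (1 / β) * ∫ x in Ioi (0:ℝ), x ^ (3 / β - 1) * Real.log (1 - Real.exp (-(a * x))) :=
    integral_const_mul _ _
  have key := key_integral (3 / β) a hs ha
  -- zeta value
  have hcast : (1 : ℂ) + 3 / (β : ℂ) = ((1 + 3 / β : ℝ) : ℂ) := by push_cast; ring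
  have hre : 1 < ((1 + 3 / β : ℝ) : ℂ).re := by
    rw [Complex.ofReal_re]; linarith
  have hzeta : riemannZeta (1 + (3 : ℂ) / (β : ℂ))
      = ((∑' n : ℕ, (((n:ℝ) + 1) ^ (3 / β + 1))⁻¹ : ℝ) : ℂ) := by
    rw [hcast, zeta_eq_tsum_one_div_nat_add_one_cpow hre, Complex.ofReal_tsum]
    refine tsum_congr (fun n => ?_)
    have hb : (0:ℝ) ≤ (n:ℝ) + 1 := by positivity
    rw [one_div, add_comm (3 / β : ℝ) 1,
      show ((n:ℂ) + 1) = (((n:ℝ) + 1 : ℝ) : ℂ) from by push_cast; ring,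
      ← Complex.ofReal_cpow hb, ← Complex.ofReal_inv]
  have hpow : a ^ (-(3 / β)) = (T / γ) ^ ((3:ℝ) / β) := by
    rw [ha_def, Real.rpow_neg (div_pos hγ hT).le, ← Real.inv_rpow (div_pos hγ hT).le, inv_div]
  rw [step1, step2, step3, key, hpow, hzeta]
  push_cast
  ring
end

section
/- For all real r > 2 and t > 0, (1/(4·(r-2)·t²))·[(-1 + √(3/π))·((r-2)/r)^{1+√3/2}·r + (2 - 2r - √3 - 1/√π)·(t/r)] < 0. -/
/-- Condition (A) for past-directed ingoing light sheets in the scalar field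
spacetime: the quantity `s + θ/4` is negative for all `r > 2`, `t > 0`. -/
theorem condition_A_past_ingoing (r t : ℝ) (hr : 2 < r) (ht : 0 < t) :
    (1 / (4 * (r - 2) * t ^ 2)) *
        ((-1 + Real.sqrt (3 / Real.pi)) * ((r - 2) / r) ^ (1 + Real.sqrt 3 / 2) * r
          + (2 - 2 * r - Real.sqrt 3 - 1 / Real.sqrt Real.pi) * (t / r)) < 0 := by
  have hr0 : (0:ℝ) < r := by linarith
  have hr2 : (0:ℝ) < r - 2 := by linarith
  have hpos : (0:ℝ) < 1 / (4 * (r - 2) * t ^ 2) := by positivity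
  have hx : (0:ℝ) < (r - 2) / r := div_pos hr2 hr0
  have hpow : (0:ℝ) < ((r - 2) / r) ^ (1 + Real.sqrt 3 / 2) := Real.rpow_pos_of_pos hx _
  have hpi : (3:ℝ) < Real.pi := Real.pi_gt_three
  have hs : Real.sqrt (3 / Real.pi) < 1 := by
    rw [show (1:ℝ) = Real.sqrt 1 by simp]
    apply Real.sqrt_lt_sqrt (by positivity)
    rw [div_lt_one (by linarith)]
    linarith
  have h1 : (-1 + Real.sqrt (3 / Real.pi)) * ((r - 2) / r) ^ (1 + Real.sqrt 3 / 2) * r < 0 := by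
    have : -1 + Real.sqrt (3 / Real.pi) < 0 := by linarith
    have := mul_neg_of_neg_of_pos (mul_neg_of_neg_of_pos this hpow) hr0
    exact this
  have h2 : (2 - 2 * r - Real.sqrt 3 - 1 / Real.sqrt Real.pi) * (t / r) < 0 := by
    apply mul_neg_of_neg_of_pos _ (by positivity)
    have h3 : 0 < Real.sqrt 3 := Real.sqrt_pos.2 (by norm_num)
    have h4 : 0 < 1 / Real.sqrt Real.pi := by positivity
    linarith
  have := mul_pos hpos (by linarith : 0 < -((-1 + Real.sqrt (3 / Real.pi)) * ((r - 2) / r) ^ (1 + Real.sqrt 3 / 2) * r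
          + (2 - 2 * r - Real.sqrt 3 - 1 / Real.sqrt Real.pi) * (t / r)))
  nlinarith [this]
end
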